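/- Let v be a non-root, non-leaf vertex of a canonical tree extension Γ of N with children q₁, q₂ (not necessarily distinct), and let [HW_v(Γ), S, ψ] be a signature. For i ∈ {1,2} let S_i := {(x,y) ∈ S : L(T_y) ⊆ L(Γ_{q_i})}. Then [HW_v(Γ), S, ψ] is valid if and only if S = S₁ ∪ S₂ and [GW_{q_i}(Γ), S_i, ψ|_{S_i}] is a valid signature for each i ∈ {1,2}. -/

import Mathlib

/-- A finite digraph on vertex type `V`. -/
structure Digr (V : Type) where
  verts : Finset V
  arcs  : Finset (V × V)
  arc_mem : ∀ a ∈ arcs, a.1 ∈ verts ∧ a.2 ∈ verts ∧ a.1 ≠ a.2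

namespace Digr

variable {V : Type} [DecidableEq V]

def Adj (D : Digr V) (u v : V) : Prop := (u, v) ∈ D.arcs

def Reach (D : Digr V) : V → V → Prop := Relation.ReflTransGen D.Adj

def SReach (D : Digr V) : V → V → Prop := Relation.TransGen D.Adj

def Acyclic (D : Digr V) : Prop := ∀ v, ¬ D.SReach v v

def inDeg (D : Digr V) (v : V) : ℕ := (D.arcs.filter fun a => a.2 = v).card

def outDeg (D : Digr V) (v : V) : ℕ := (D.arcs.filter fun a => a.1 = v).card

def maxOutDeg (D : Digr V) : ℕ := D.verts.sup D.outDeg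

def IsRoot (D : Digr V) (v : V) : Prop := v ∈ D.verts ∧ D.inDeg v = 0

/-- A rooted DAG: acyclic with exactly one root. -/
def Rooted (D : Digr V) : Prop := D.Acyclic ∧ ∃! r, D.IsRoot r

/-- A rooted DAG all of whose vertices are reachable from the root. -/
def RootedConn (D : Digr V) : Prop :=
  D.Acyclic ∧ ∃ r, D.IsRoot r ∧ ∀ v ∈ D.verts, D.Reach r v

def leaves (D : Digr V) : Set V := {v | v ∈ D.verts ∧ D.outDeg v = 0}

/-- An out-tree: a rooted DAG in which every vertex has in-degree at most 1. -/
def IsOutTree (D : Digr V) : Prop := D.Rooted ∧ ∀ v ∈ D.verts, D.inDeg v ≤ 1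

/-- `Γ` is a tree extension of `D`. -/
def IsTreeExt (D Γ : Digr V) : Prop :=
  Γ.IsOutTree ∧ Γ.verts = D.verts ∧ ∀ a ∈ D.arcs, Γ.SReach a.1 a.2

/-- `GW_t(Γ) = {(u,v) ∈ A(D) | u >_Γ t ≥_Γ v}`. -/
def GW (D Γ : Digr V) (t : V) : Set (V × V) :=
  {a | a ∈ D.arcs ∧ Γ.SReach a.1 t ∧ Γ.Reach t a.2}

/-- `HW_t(Γ) = {(u,v) ∈ A(D) | u ≥_Γ t >_Γ v}`. -/
def HW (D Γ : Digr V) (t : V) : Set (V × V) :=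
  {a | a ∈ D.arcs ∧ Γ.Reach a.1 t ∧ Γ.SReach t a.2}

/-- `sw_D(Γ)`. -/
noncomputable def swOf (D Γ : Digr V) : ℕ := Γ.verts.sup fun t => (GW D Γ t).ncard

/-- The scanwidth of `D`: minimum width over all tree extensions. -/
noncomputable def scanwidth (D : Digr V) : ℕ :=
  sInf {k | ∃ Γ : Digr V, IsTreeExt D Γ ∧ swOf D Γ = k}

/-- The subgraph of `D` induced by `U` is weakly connected. -/
def WConnOn (D : Digr V) (U : Set V) : Prop :=
  ∀ u ∈ U, ∀ v ∈ U, Relation.ReflTransGen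
    (fun a b => a ∈ U ∧ b ∈ U ∧ ((a, b) ∈ D.arcs ∨ (b, a) ∈ D.arcs)) u v

/-- A canonical tree extension of `D`. -/
def Canonical (D Γ : Digr V) : Prop :=
  IsTreeExt D Γ ∧ ∀ t ∈ Γ.verts, D.WConnOn {v | Γ.Reach t v}

/-- Phylogenetic network: rooted DAG whose root has out-degree ≥ 2 and each
non-root vertex has in-degree 1 or out-degree 1, but not both. -/
def IsNetwork (N : Digr V) : Prop :=
  N.Rooted ∧ ∀ r, N.IsRoot r → 2 ≤ N.outDeg r ∧
    ∀ v ∈ N.verts, v ≠ r → Xor' (N.inDeg v = 1) (N.outDeg v = 1)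

/-- Phylogenetic tree: a network without reticulations. -/
def IsPhyloTree (T : Digr V) : Prop := T.IsNetwork ∧ ∀ v ∈ T.verts, T.inDeg v ≤ 1

def BinaryD (D : Digr V) : Prop := ∀ v ∈ D.verts, D.inDeg v ≤ 2 ∧ D.outDeg v ≤ 2

/-- One in-splitting step. -/
def InSplit (D D' : Digr V) : Prop :=
  ∃ v u w x, 3 ≤ D.inDeg v ∧ (u, v) ∈ D.arcs ∧ (w, v) ∈ D.arcs ∧ u ≠ w ∧
    x ∉ D.verts ∧ D'.verts = insert x D.verts ∧
    D'.arcs = insert (u, x) (insert (w, x) (insert (x, v)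
      ((D.arcs.erase (u, v)).erase (w, v))))

/-- One out-splitting step. -/
def OutSplit (D D' : Digr V) : Prop :=
  ∃ v u w x, 3 ≤ D.outDeg v ∧ (v, u) ∈ D.arcs ∧ (v, w) ∈ D.arcs ∧ u ≠ w ∧
    x ∉ D.verts ∧ D'.verts = insert x D.verts ∧
    D'.arcs = insert (v, x) (insert (x, u) (insert (x, w)
      ((D.arcs.erase (v, u)).erase (v, w))))

/-- Binary in-resolution: exhaustive in-splitting. -/
def BinInRes (D D' : Digr V) : Prop :=
  Relation.ReflTransGen InSplit D D' ∧ ∀ v ∈ D'.verts, D'.inDeg v ≤ 2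

/-- Binary out-resolution: exhaustive out-splitting. -/
def BinOutRes (D D' : Digr V) : Prop :=
  Relation.ReflTransGen OutSplit D D' ∧ ∀ v ∈ D'.verts, D'.outDeg v ≤ 2

/-- Binary resolution: binary out-resolution of a binary in-resolution. -/
def BinRes (D D' : Digr V) : Prop := ∃ D'' : Digr V, BinInRes D D'' ∧ BinOutRes D'' D'

def SubD (D' D : Digr V) : Prop := D'.verts ⊆ D.verts ∧ D'.arcs ⊆ D.arcs

/-- Leaf-monotone subdigraph. -/
def LeafMono (D' D : Digr V) : Prop := SubD D' D ∧ D'.leaves ⊆ D.leaves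

/-- One arc subdivision step. -/
def SubdivStep (D D' : Digr V) : Prop :=
  ∃ u v w, (u, v) ∈ D.arcs ∧ w ∉ D.verts ∧ D'.verts = insert w D.verts ∧
    D'.arcs = insert (u, w) (insert (w, v) (D.arcs.erase (u, v)))

/-- `D'` is a subdivision of `D`. -/
def IsSubdivisionOf (D' D : Digr V) : Prop := Relation.ReflTransGen SubdivStep D D'

/-- Leaf-respecting isomorphism. -/
def LeafIso (D D' : Digr V) : Prop :=
  ∃ ι : V → V, Set.BijOn ι ↑D.verts ↑D'.verts ∧
    (∀ u v, u ∈ D.verts → v ∈ D.verts → ((u, v) ∈ D.arcs ↔ (ι u, ι v) ∈ D'.arcs)) ∧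
    ∀ ℓ ∈ D.leaves, ι ℓ = ℓ

/-- `N` firmly displays `T`. -/
def FirmDisp (N T : Digr V) : Prop :=
  ∃ T' N' : Digr V, IsSubdivisionOf T' T ∧ LeafMono N' N ∧ LeafIso T' N'

/-- `N` softly displays `T`. -/
def SoftDisp (N T : Digr V) : Prop :=
  ∃ N' T' : Digr V, BinRes N N' ∧ BinRes T T' ∧ FirmDisp N' T'

def arcsOfList (l : List V) : List (V × V) := l.zip l.tail

def firstArc (l : List V) : Option (V × V) :=
  match l with
  | a :: b :: _ => some (a, b)
  | _ => none

/-- `l` is (the vertex list of) a directed path in `D`. -/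
def IsPathList (D : Digr V) (l : List V) : Prop :=
  l ≠ [] ∧ l.Nodup ∧ (∀ v ∈ l, v ∈ D.verts) ∧ l.Chain' D.Adj

/-- Eventual arc-disjointness of two paths (as vertex lists). -/
def EAD : List V → List V → Prop
  | a :: b :: p, q =>
      2 ≤ q.length ∧
        (List.Disjoint (arcsOfList (a :: b :: p)) (arcsOfList q) ∨
          (some a = q.head? ∧ EAD (b :: p) q.tail))
  | _, _ => False

/-- Soft pseudo-embedding of the set of arcs `F` (of a forest in `T`) into `N`. -/
structure IsSPE (N T : Digr V) (F : Set (V × V)) (φ : V × V → List V) : Prop where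
  path : ∀ a ∈ F, IsPathList N (φ a) ∧ 2 ≤ (φ a).length
  spe1 : ∀ x y z, (x, y) ∈ F → (y, z) ∈ F →
    (φ (x, y)).getLast? = (φ (y, z)).head?
  spe2 : ∀ x y x' y', (x, y) ∈ F → (x', y') ∈ F → x ≠ x' →
    List.Disjoint (arcsOfList (φ (x, y))) (arcsOfList (φ (x', y')))
  spe3 : ∀ x y y', (x, y) ∈ F → (x, y') ∈ F → y ≠ y' → EAD (φ (x, y)) (φ (x, y'))
  spe4 : ∀ x ℓ, (x, ℓ) ∈ F → ℓ ∈ T.leaves → (φ (x, ℓ)).getLast? = some ℓ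

/-- The downward-closed forest below a top-arc set `S`. -/
def ForestBelow (T : Digr V) (S : Set (V × V)) : Set (V × V) :=
  S ∪ {b | b ∈ T.arcs ∧ ∃ a ∈ S, T.Reach a.2 b.1}

/-- `S` is a top-arc set (an arc set whose tails have in-degree 0 in the forest below). -/
def IsTopArcSet (T : Digr V) (S : Set (V × V)) : Prop :=
  S ⊆ ↑T.arcs ∧ ∀ a ∈ S, ∀ b ∈ ForestBelow T S, b.2 ≠ a.1

def forestLeaves (T : Digr V) (S : Set (V × V)) : Set V :=
  {x | x ∈ T.leaves ∧ ∃ a ∈ ForestBelow T S, a.2 = x}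

/-- Signature `[B, S, ψ]` (with `ψ` represented as an `Option`-valued map with support `S`). -/
def IsSig (N T : Digr V) (B S : Set (V × V)) (ψ : V × V → Option (V × V)) : Prop :=
  B ⊆ ↑N.arcs ∧ IsTopArcSet T S ∧
    forestLeaves T S = {ℓ | ℓ ∈ N.leaves ∧ ∃ a ∈ B, N.Reach a.2 ℓ} ∧
    (∀ a ∈ S, ∃ b ∈ B, ψ a = some b) ∧ ∀ a, a ∉ S → ψ a = none

/-- Valid signature `[B, S, ψ]`. -/
def ValidSig (N T : Digr V) (B S : Set (V × V)) (ψ : V × V → Option (V × V)) : Prop :=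
  IsSig N T B S ψ ∧
    ∃ φ : V × V → List V, IsSPE N T (ForestBelow T S) φ ∧
      ∀ a ∈ S, firstArc (φ a) = ψ a

/-- Restriction of (the `Option`-valued) `ψ` to `S`. -/
noncomputable def restrictPsi (ψ : V × V → Option (V × V)) (S : Set (V × V)) :
    V × V → Option (V × V) := fun a =>
  @ite _ (a ∈ S) (Classical.propDecidable _) (ψ a) none

/-- Downward-closed set of arcs of `T`. -/
def DownClosed (T : Digr V) (F : Set (V × V)) : Prop :=
  F ⊆ ↑T.arcs ∧ ∀ a ∈ F, ∀ b ∈ T.arcs, T.Reach a.2 b.1 → b ∈ F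

/-- `D'` arises from `D` by attaching a new root `ρ` above the old root. -/
def AttachRoot (D : Digr V) (ρ : V) (D' : Digr V) : Prop :=
  ρ ∉ D.verts ∧ D'.verts = insert ρ D.verts ∧
    ∃ r, D.IsRoot r ∧ D'.arcs = insert (ρ, r) D.arcs

/-- Assumption (as:NTGamma): `Ns` binary network, `Ts` tree with the same leaves,
`N` and `T` obtained by attaching new roots `ρN`, `ρT`. -/
def PaperSetup (Ns Ts N T : Digr V) (ρN ρT : V) : Prop :=
  Ns.IsNetwork ∧ BinaryD Ns ∧ IsPhyloTree Ts ∧ Ts.leaves = Ns.leaves ∧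
    AttachRoot Ns ρN N ∧ AttachRoot Ts ρT T

/-! ### Stretch gadget (Definition 8, full version) -/

def UdomS (d : ℕ) : Set (ℕ × ℕ) :=
  {p | (2 ≤ p.1 ∧ p.1 ≤ d - 1 ∧ 1 ≤ p.2 ∧ p.2 ≤ p.1) ∨
    (p.1 = d ∧ 2 ≤ p.2 ∧ p.2 ≤ d - 1)}

def UPdomS (d : ℕ) : Set (ℕ × ℕ) :=
  {p | 3 ≤ p.1 ∧ p.1 ≤ d - 1 ∧ 2 ≤ p.2 ∧ p.2 ≤ p.1 - 1}

def WdomS (d : ℕ) : Set (ℕ × ℕ × ℕ) :=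
  {p | 1 ≤ p.1 ∧ p.1 ≤ d - 1 ∧ 1 ≤ p.2.1 ∧ p.2.1 ≤ d - 1 ∧ 1 ≤ p.2.2 ∧ p.2.2 ≤ 4}

/-- The arc set of the network obtained from `D` by stretching `v`. -/
def stretchArcs (D : Digr V) (v : V) (d : ℕ) (c : ℕ → V)
    (u u' : ℕ → ℕ → V) (w : ℕ → ℕ → ℕ → V) : Set (V × V) :=
  ((D.arcs : Set (V × V)) \ {a | a.1 = v}) ∪
  ({(v, u 2 1), (v, u 2 2)} : Set (V × V)) ∪
  {a | ∃ i, 2 ≤ i ∧ i ≤ d - 2 ∧ (a = (u i 1, u (i+1) 1) ∨ a = (u i 1, u (i+1) 2))} ∪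
  {a | ∃ i, 2 ≤ i ∧ i ≤ d - 2 ∧ (a = (u i i, u (i+1) i) ∨ a = (u i i, u (i+1) (i+1)))} ∪
  {a | ∃ i j, 3 ≤ i ∧ i ≤ d - 1 ∧ 2 ≤ j ∧ j ≤ i - 1 ∧ a = (u i j, u' i j)} ∪
  {a | ∃ i j, 3 ≤ i ∧ i ≤ d - 1 ∧ 2 ≤ j ∧ j ≤ i - 1 ∧
      (a = (u' i j, u (i+1) j) ∨ a = (u' i j, u (i+1) (j+1)))} ∪
  ({(u (d-1) 1, w 1 1 1), (u (d-1) 1, u d 2)} : Set (V × V)) ∪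
  ({(u (d-1) (d-1), u d (d-1)), (u (d-1) (d-1), w 1 (d-1) 2)} : Set (V × V)) ∪
  {a | ∃ j, 2 ≤ j ∧ j ≤ d - 1 ∧ a = (u d j, w 1 (j-1) 2)} ∪
  {a | ∃ i j, 1 ≤ i ∧ i ≤ d - 1 ∧ 1 ≤ j ∧ j ≤ d - 1 ∧
      (a = (w i j 1, w i j 3) ∨ a = (w i j 1, w i j 4) ∨
        a = (w i j 2, w i j 3) ∨ a = (w i j 2, w i j 4))} ∪
  {a | ∃ i j, 1 ≤ i ∧ i ≤ d - 1 ∧ 1 ≤ j ∧ j ≤ d - 2 ∧ a = (w i j 4, w i (j+1) 1)} ∪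
  {a | ∃ i, 1 ≤ i ∧ i ≤ d - 2 ∧ a = (w i 1 3, w (i+1) 1 1)} ∪
  {a | ∃ i, 1 ≤ i ∧ i ≤ d - 2 ∧ a = (w i (d-1) 4, w (i+1) (d-1) 2)} ∪
  {a | ∃ i j, 1 ≤ i ∧ i ≤ d - 2 ∧ 2 ≤ j ∧ j ≤ d - 1 ∧ a = (w i j 3, w (i+1) (j-1) 2)} ∪
  {a | ∃ j, 1 ≤ j ∧ j ≤ d - 1 ∧ a = (w (d-1) j 3, c j)} ∪
  {(w (d-1) (d-1) 4, c d)}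

/-- `D'` arises from `D` by stretching the vertex `v` (of out-degree `d ≥ 3`). -/
def StretchV (D : Digr V) (v : V) (D' : Digr V) : Prop :=
  ∃ (d : ℕ) (c : ℕ → V) (u u' : ℕ → ℕ → V) (w : ℕ → ℕ → ℕ → V),
    d = D.outDeg v ∧ 3 ≤ d ∧
    Set.BijOn c (Set.Icc 1 d) {x | (v, x) ∈ D.arcs} ∧
    Set.InjOn (fun p => u p.1 p.2) (UdomS d) ∧
    Set.InjOn (fun p => u' p.1 p.2) (UPdomS d) ∧
    Set.InjOn (fun p => w p.1 p.2.1 p.2.2) (WdomS d) ∧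
    (∀ p ∈ UdomS d, u p.1 p.2 ∉ D.verts) ∧
    (∀ p ∈ UPdomS d, u' p.1 p.2 ∉ D.verts) ∧
    (∀ p ∈ WdomS d, w p.1 p.2.1 p.2.2 ∉ D.verts) ∧
    (∀ p ∈ UdomS d, ∀ q ∈ UPdomS d, u p.1 p.2 ≠ u' q.1 q.2) ∧
    (∀ p ∈ UdomS d, ∀ q ∈ WdomS d, u p.1 p.2 ≠ w q.1 q.2.1 q.2.2) ∧
    (∀ p ∈ UPdomS d, ∀ q ∈ WdomS d, u' p.1 p.2 ≠ w q.1 q.2.1 q.2.2) ∧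
    ((D'.verts : Set V) =
      (D.verts : Set V) ∪ (fun p : ℕ × ℕ => u p.1 p.2) '' UdomS d ∪
        (fun p : ℕ × ℕ => u' p.1 p.2) '' UPdomS d ∪
        (fun p : ℕ × ℕ × ℕ => w p.1 p.2.1 p.2.2) '' WdomS d) ∧
    (D'.arcs : Set (V × V)) = stretchArcs D v d c u u' w

def StretchStep (D D' : Digr V) : Prop :=
  ∃ v ∈ D.verts, 3 ≤ D.outDeg v ∧ StretchV D v D'

/-- `N'` is `str(N)`: obtained by exhaustively stretching all vertices of
out-degree at least 3. -/
def IsStretch (N N' : Digr V) : Prop :=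
  Relation.ReflTransGen StretchStep N N' ∧ ∀ v ∈ N'.verts, N'.outDeg v ≤ 2

/-! ### Level -/

def underSG (D : Digr V) : SimpleGraph V :=
  SimpleGraph.fromRel fun a b => (a, b) ∈ D.arcs

/-- Two edges of the underlying graph lie in the same biconnected component. -/
def SameBlock (D : Digr V) (e f : Sym2 V) : Prop :=
  e = f ∨ ∃ (x : V) (wlk : (underSG D).Walk x x),
    wlk.IsCycle ∧ e ∈ wlk.edges ∧ f ∈ wlk.edges

def IsReticulation (D : Digr V) (v : V) : Prop := v ∈ D.verts ∧ 2 ≤ D.inDeg v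

/-- `D` has level at most `c`: each biconnected component of the underlying graph
contains at most `c` reticulations. -/
def LevelAtMost (D : Digr V) (c : ℕ) : Prop :=
  ∀ e ∈ (underSG D).edgeSet,
    {v | IsReticulation D v ∧
      ∃ f ∈ (underSG D).edgeSet, SameBlock D e f ∧ v ∈ f}.ncard ≤ c

end Digr

open Digr
set_option linter.unusedSectionVars false

namespace Digr

variable {V : Type} [DecidableEq V]

lemma arc_ne (D : Digr V) {a b : V} (h : (a, b) ∈ D.arcs) : a ≠ b :=
  (D.arc_mem _ h).2.2

lemma arc_mem_fst (D : Digr V) {a b : V} (h : (a, b) ∈ D.arcs) : a ∈ D.verts :=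
  (D.arc_mem _ h).1

lemma arc_mem_snd (D : Digr V) {a b : V} (h : (a, b) ∈ D.arcs) : b ∈ D.verts :=
  (D.arc_mem _ h).2.1

lemma indeg_unique (D : Digr V) {c : V} (hc : D.inDeg c ≤ 1) {x y : V}
    (h1 : (x, c) ∈ D.arcs) (h2 : (y, c) ∈ D.arcs) : x = y := by
  have := Finset.card_le_one.mp hc (x, c) (by simp [Digr.inDeg, h1]) (y, c)
    (by simp [Digr.inDeg, h2])
  exact congrArg Prod.fst this

lemma outDeg_zero_not_mem (D : Digr V) {x : V} (h : D.outDeg x = 0) {y : V} :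
    (x, y) ∉ D.arcs := by
  intro hm
  have : (x, y) ∈ D.arcs.filter fun a => a.1 = x := by simp [hm]
  rw [Digr.outDeg, Finset.card_eq_zero] at h
  rw [h] at this
  simp at this

lemma outDeg_ne_zero_arc (D : Digr V) {x : V} (h : D.outDeg x ≠ 0) :
    ∃ y, (x, y) ∈ D.arcs := by
  rw [Digr.outDeg] at h
  obtain ⟨a, ha⟩ := Finset.card_pos.mp (Nat.pos_of_ne_zero h)
  simp only [Finset.mem_filter] at ha
  exact ⟨a.2, by rw [← ha.2]; exact ha.1⟩

/-- Out-tree in-arc uniqueness. -/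
lemma outTree_in_unique {Γ : Digr V} (hT : Γ.IsOutTree) {c x y : V}
    (h1 : (x, c) ∈ Γ.arcs) (h2 : (y, c) ∈ Γ.arcs) : x = y :=
  Γ.indeg_unique (hT.2 c (Γ.arc_mem_snd h1)) h1 h2

/-- Comparability of common ancestors in an out-tree. -/
lemma outTree_comp {Γ : Digr V} (hT : Γ.IsOutTree) {a b c : V}
    (hac : Γ.Reach a c) (hbc : Γ.Reach b c) : Γ.Reach a b ∨ Γ.Reach b a := by
  revert hac
  induction hbc with
  | refl => exact fun hac => Or.inl hac
  | @tail m c hbm hmc ih =>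
    intro hac
    rcases hac.cases_tail with rfl | ⟨m', ham', hm'c⟩
    · exact Or.inr (hbm.tail hmc)
    · have : m' = m := outTree_in_unique hT hm'c hmc
      exact ih (this ▸ ham')

/-- Strict ancestors of a vertex with in-arc `(v,q)` pass through `v`. -/
lemma above_child {Γ : Digr V} (hT : Γ.IsOutTree) {v q u : V}
    (hvq : (v, q) ∈ Γ.arcs) (h : Γ.SReach u q) : Γ.Reach u v := by
  obtain ⟨m, hum, hmq⟩ := Relation.TransGen.tail'_iff.mp h
  have : m = v := outTree_in_unique hT hmq hvq
  exact this ▸ hum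

/-- Descendants of two distinct children of `v` are disjoint. -/
lemma child_disj {Γ : Digr V} (hT : Γ.IsOutTree) {v q1 q2 : V}
    (h1 : (v, q1) ∈ Γ.arcs) (h2 : (v, q2) ∈ Γ.arcs) (hne : q1 ≠ q2) {x : V}
    (hx1 : Γ.Reach q1 x) (hx2 : Γ.Reach q2 x) : False := by
  have key : ∀ a b : V, a ≠ b → (v, a) ∈ Γ.arcs → (v, b) ∈ Γ.arcs →
      ¬ Γ.Reach a b := by
    intro a b hab hva hvb hr
    have hs : Γ.SReach a b := by
      rcases hr.cases_tail with rfl | ⟨m, ham, hmb⟩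
      · exact absurd rfl hab
      · exact Relation.TransGen.tail' ham hmb
    have hav : Γ.Reach a v := above_child hT hvb hs
    exact hT.1.1 v (Relation.TransGen.head' hva hav)
  rcases outTree_comp hT hx1 hx2 with h | h
  · exact key q1 q2 hne h1 h2 h
  · exact key q2 q1 (Ne.symm hne) h2 h1 h

lemma reach_of_sreach {D : Digr V} {a b : V} (h : D.SReach a b) : D.Reach a b :=
  h.to_reflTransGen

/-- `N`-reachability implies `Γ`-reachability for a tree extension. -/
lemma nreach_greach {N Γ : Digr V} (hext : IsTreeExt N Γ) {a b : V}
    (h : N.Reach a b) : Γ.Reach a b := by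
  induction h with
  | refl => exact Relation.ReflTransGen.refl
  | @tail m c _ hmc ih => exact ih.trans (hext.2.2 _ hmc).to_reflTransGen

end Digr

namespace Digr

variable {V : Type} [DecidableEq V]

/-- Propagate a step-monotone predicate along a chain, from the head. -/
lemma chain_prop (D : Digr V) (Q : V → Prop)
    (hstep : ∀ a b : V, (a, b) ∈ D.arcs → Q a → Q b) :
    ∀ l : List V, l.Chain' D.Adj → ∀ x, l.head? = some x → Q x →
      (∀ p ∈ arcsOfList l, Q p.2) ∧ (∀ z, l.getLast? = some z → Q z) := by
  intro l
  induction l with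
  | nil => simp
  | cons c t ih =>
    intro hch x hx hQ
    simp only [List.head?_cons, Option.some.injEq] at hx
    subst hx
    cases t with
    | nil =>
      constructor
      · simp [arcsOfList]
      · intro z hz; simp at hz; subst hz; exact hQ
    | cons d t' =>
      obtain ⟨hcd, hch'⟩ := List.isChain_cons_cons.mp hch
      have hQd : Q d := hstep _ _ hcd hQ
      obtain ⟨h1, h2⟩ := ih hch' d rfl hQd
      constructor
      · intro p hp
        simp only [arcsOfList, List.tail_cons, List.zip_cons_cons,
          List.mem_cons] at hp
        rcases hp with rfl | hp
        · exact hQd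
        · exact h1 p hp
      · intro z hz
        rw [List.getLast?_cons_cons] at hz
        exact h2 z hz

/-- Same, but the predicate is only known at the *second* element. -/
lemma chain_prop2 (D : Digr V) (Q : V → Prop)
    (hstep : ∀ a b : V, (a, b) ∈ D.arcs → Q a → Q b)
    {u w : V} {t : List V} (hch : (u :: w :: t).Chain' D.Adj) (hQ : Q w) :
    (∀ p ∈ arcsOfList (u :: w :: t), Q p.2) ∧
      (∀ z, (u :: w :: t).getLast? = some z → Q z) := by
  obtain ⟨h1, h2⟩ := chain_prop D Q hstep (w :: t) hch.tail w rfl hQ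
  constructor
  · intro p hp
    simp only [arcsOfList, List.tail_cons, List.zip_cons_cons, List.mem_cons] at hp
    rcases hp with rfl | hp
    · exact hQ
    · exact h1 p hp
  · intro z hz
    rw [List.getLast?_cons_cons] at hz
    exact h2 z hz

lemma firstArc_inv {l : List V} {u w : V} (h : firstArc l = some (u, w)) :
    ∃ t, l = u :: w :: t := by
  match l, h with
  | a :: b :: t, h =>
    simp only [firstArc, Option.some.injEq, Prod.mk.injEq] at h
    exact ⟨t, by rw [h.1, h.2]⟩

lemma path_getLast?_isSome {D : Digr V} {l : List V} (h : IsPathList D l) :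
    ∃ z, l.getLast? = some z := by
  cases l with
  | nil => exact absurd rfl h.1
  | cons a t => exact ⟨(a :: t).getLast (by simp), List.getLast?_eq_getLast _⟩

lemma path_head?_isSome {D : Digr V} {l : List V} (h : IsPathList D l) :
    ∃ z, l.head? = some z := by
  cases l with
  | nil => exact absurd rfl h.1
  | cons a t => exact ⟨a, rfl⟩

/-! ### ForestBelow lemmas -/

lemma FB_mono (T : Digr V) {S S' : Set (V × V)} (h : S ⊆ S') :
    ForestBelow T S ⊆ ForestBelow T S' := by
  rintro e (he | ⟨he1, a, ha, har⟩)
  · exact Or.inl (h he)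
  · exact Or.inr ⟨he1, a, h ha, har⟩

lemma FB_union (T : Digr V) (S1 S2 : Set (V × V)) :
    ForestBelow T (S1 ∪ S2) = ForestBelow T S1 ∪ ForestBelow T S2 := by
  ext e
  constructor
  · rintro (he | ⟨he1, a, (ha | ha), har⟩)
    · rcases he with he | he
      · exact Or.inl (Or.inl he)
      · exact Or.inr (Or.inl he)
    · exact Or.inl (Or.inr ⟨he1, a, ha, har⟩)
    · exact Or.inr (Or.inr ⟨he1, a, ha, har⟩)
  · rintro ((he | ⟨he1, a, ha, har⟩) | (he | ⟨he1, a, ha, har⟩))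
    · exact Or.inl (Or.inl he)
    · exact Or.inr ⟨he1, a, Or.inl ha, har⟩
    · exact Or.inl (Or.inr he)
    · exact Or.inr ⟨he1, a, Or.inr ha, har⟩

lemma FB_sub_arcs (T : Digr V) {S : Set (V × V)} (h : S ⊆ ↑T.arcs) :
    ForestBelow T S ⊆ ↑T.arcs := by
  rintro e (he | ⟨he1, _⟩)
  · exact h he
  · exact he1

lemma FB_elim {T : Digr V} {S : Set (V × V)} {e : V × V}
    (h : e ∈ ForestBelow T S) :
    ∃ a ∈ S, e = a ∨ (e ∈ T.arcs ∧ T.Reach a.2 e.1) := by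
  rcases h with he | ⟨he1, a, ha, har⟩
  · exact ⟨e, he, Or.inl rfl⟩
  · exact ⟨a, ha, Or.inr ⟨he1, har⟩⟩

lemma FB_reach_head {T : Digr V} {S : Set (V × V)} {e : V × V}
    (h : e ∈ ForestBelow T S) : ∃ a ∈ S, T.Reach a.2 e.2 := by
  obtain ⟨a, ha, he⟩ := FB_elim h
  rcases he with rfl | ⟨he1, har⟩
  · exact ⟨e, ha, Relation.ReflTransGen.refl⟩
  · exact ⟨a, ha, har.tail (show T.Adj e.1 e.2 from by simpa [Digr.Adj] using he1)⟩

lemma spe_mono {N T : Digr V} {F F' : Set (V × V)} {φ : V × V → List V}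
    (h : IsSPE N T F φ) (hs : F' ⊆ F) : IsSPE N T F' φ :=
  ⟨fun a ha => h.path a (hs ha),
   fun x y z h1 h2 => h.spe1 x y z (hs h1) (hs h2),
   fun x y x' y' h1 h2 => h.spe2 x y x' y' (hs h1) (hs h2),
   fun x y y' h1 h2 => h.spe3 x y y' (hs h1) (hs h2),
   fun x ℓ h1 => h.spe4 x ℓ (hs h1)⟩

end Digr

namespace Digr

variable {V : Type} [DecidableEq V]

/-- Key chaining lemma: a step-monotone predicate seeded at the last vertex of the
image of a top arc propagates to all images of arcs below it. -/
lemma spe_chain {N T : Digr V} {F : Set (V × V)} {φ : V × V → List V}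
    (hφ : IsSPE N T F φ) (Q : V → Prop)
    (hstep : ∀ a b : V, (a, b) ∈ N.arcs → Q a → Q b)
    {a0 : V × V} (ha0 : a0 ∈ F)
    (hseed : ∀ z, (φ a0).getLast? = some z → Q z)
    (hmid : ∀ m x : V, T.Reach a0.2 m → (m, x) ∈ T.arcs → (m, x) ∈ F) :
    ∀ x : V, T.Reach a0.2 x → ∀ y : V, (x, y) ∈ F →
      (∀ p ∈ arcsOfList (φ (x, y)), Q p.2) ∧
        (∀ z, (φ (x, y)).getLast? = some z → Q z) := by
  intro x hx
  induction hx with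
  | refl =>
    intro y hy
    have hsp := hφ.spe1 a0.1 a0.2 y (by simpa using ha0) hy
    obtain ⟨c, hc⟩ := path_head?_isSome (hφ.path _ hy).1
    have hQc : Q c := hseed c (by rw [hsp, hc])
    obtain ⟨u, w, t, hl⟩ : ∃ u w t, φ (a0.2, y) = u :: w :: t := by
      obtain ⟨hp, hlen⟩ := hφ.path _ hy
      match hll : φ (a0.2, y), hlen with
      | u :: w :: t, _ => exact ⟨u, w, t, rfl⟩
    rw [hl] at hc ⊢
    simp only [List.head?_cons, Option.some.injEq] at hc
    subst hc
    have hch : (u :: w :: t).Chain' N.Adj := by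
      have := (hφ.path _ hy).1.2.2.2; rwa [hl] at this
    have hQw : Q w := hstep u w hch.rel_head hQc
    exact chain_prop2 N Q hstep hch hQw
  | @tail m x hm hmx ih =>
    intro y hy
    have hmxF : (m, x) ∈ F := hmid m x hm hmx
    have hlast := (ih x hmxF).2
    have hsp := hφ.spe1 m x y hmxF hy
    obtain ⟨c, hc⟩ := path_head?_isSome (hφ.path _ hy).1
    have hQc : Q c := hlast c (by rw [hsp, hc])
    obtain ⟨u, w, t, hl⟩ : ∃ u w t, φ (x, y) = u :: w :: t := by
      obtain ⟨hp, hlen⟩ := hφ.path _ hy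
      match hll : φ (x, y), hlen with
      | u :: w :: t, _ => exact ⟨u, w, t, rfl⟩
    rw [hl] at hc ⊢
    simp only [List.head?_cons, Option.some.injEq] at hc
    subst hc
    have hch : (u :: w :: t).Chain' N.Adj := by
      have := (hφ.path _ hy).1.2.2.2; rwa [hl] at this
    have hQw : Q w := hstep u w hch.rel_head hQc
    exact chain_prop2 N Q hstep hch hQw

/-- Every vertex of a finite acyclic digraph reaches a leaf. -/
lemma reach_leaf (D : Digr V) (hac : D.Acyclic) :
    ∀ x ∈ D.verts, ∃ ℓ ∈ D.leaves, D.Reach x ℓ := by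
  classical
  intro x hx
  generalize hn : (D.verts.filter fun z => D.Reach x z).card = n
  induction n using Nat.strong_induction_on generalizing x with
  | _ n ih =>
    by_cases hout : D.outDeg x = 0
    · exact ⟨x, ⟨hx, hout⟩, Relation.ReflTransGen.refl⟩
    · obtain ⟨y, hy⟩ := D.outDeg_ne_zero_arc hout
      have hyx : D.Reach x y := Relation.ReflTransGen.single hy
      have hyv : y ∈ D.verts := D.arc_mem_snd hy
      have hsub : (D.verts.filter fun z => D.Reach y z) ⊆
          (D.verts.filter fun z => D.Reach x z) := by
        intro z hz
        simp only [Finset.mem_filter] at hz ⊢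
        exact ⟨hz.1, hyx.trans hz.2⟩
      have hxmem : x ∈ D.verts.filter fun z => D.Reach x z :=
        Finset.mem_filter.mpr ⟨hx, Relation.ReflTransGen.refl⟩
      have hxnot : x ∉ D.verts.filter fun z => D.Reach y z := by
        simp only [Finset.mem_filter, not_and]
        intro _ hr
        exact absurd (Relation.TransGen.head' hy hr) (hac x)
      have hlt : (D.verts.filter fun z => D.Reach y z).card < n := by
        rw [← hn]
        exact Finset.card_lt_card (Finset.ssubset_iff_of_subset hsub |>.mpr
          ⟨x, hxmem, hxnot⟩)
      obtain ⟨ℓ, hℓ, hrℓ⟩ := ih _ hlt y hyv rfl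
      exact ⟨ℓ, hℓ, hyx.trans hrℓ⟩

/-- Attaching a root preserves acyclicity. -/
lemma attach_acyclic {D D' : Digr V} {ρ : V} (h : AttachRoot D ρ D')
    (hac : D.Acyclic) : D'.Acyclic := by
  obtain ⟨hρ, hverts, r, hr, harcs⟩ := h
  have hhead : ∀ a b : V, D'.Adj a b → b ≠ ρ := by
    intro a b hab
    rw [Digr.Adj, harcs, Finset.mem_insert] at hab
    rcases hab with hab | hab
    · have : b = r := congrArg Prod.snd hab
      subst this
      exact fun hb => hρ (hb ▸ hr.1)
    · exact fun hb => hρ (hb ▸ D.arc_mem_snd hab)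
  have hlift : ∀ a b : V, D'.Adj a b → a ≠ ρ → D.Adj a b := by
    intro a b hab ha
    rw [Digr.Adj, harcs, Finset.mem_insert] at hab
    rcases hab with hab | hab
    · exact absurd (congrArg Prod.fst hab) ha
    · exact hab
  intro x hcyc
  by_cases hxρ : x = ρ
  · subst hxρ
    obtain ⟨m, _, hmx⟩ := Relation.TransGen.tail'_iff.mp hcyc
    exact hhead m x hmx rfl
  · have : D.SReach x x := by
      have key : ∀ a b : V, Relation.TransGen D'.Adj a b → a ≠ ρ →
          Relation.TransGen D.Adj a b := by
        intro a b hab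
        induction hab with
        | single h => exact fun ha => Relation.TransGen.single (hlift _ _ h ha)
        | @tail m c hm hmc ih =>
          intro ha
          exact (ih ha).tail (hlift _ _ hmc
            (by
              obtain ⟨m', _, hm'⟩ := Relation.TransGen.tail'_iff.mp hm
              exact fun hmm => hhead m' m hm' hmm))
      exact key x x hcyc hxρ
    exact hac x this

end Digr

namespace Digr

variable {V : Type} [DecidableEq V]

lemma inDeg_zero_not_mem (D : Digr V) {c : V} (h : D.inDeg c = 0) {x : V} :
    (x, c) ∉ D.arcs := by
  intro hm
  have hmem : (x, c) ∈ D.arcs.filter fun a => a.2 = c := by simp [hm]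
  rw [Digr.inDeg, Finset.card_eq_zero] at h
  rw [h] at hmem
  simp at hmem

/-- In the tree `T` of the paper setup, in-arcs are unique. -/
lemma T_in_unique {Ns Ts N T : Digr V} {ρN ρT : V}
    (hsetup : PaperSetup Ns Ts N T ρN ρT) {c x y : V}
    (h1 : (x, c) ∈ T.arcs) (h2 : (y, c) ∈ T.arcs) : x = y := by
  obtain ⟨_, _, hTs, _, _, hρ, hverts, r, hr, harcs⟩ := hsetup
  rw [harcs, Finset.mem_insert, Prod.mk.injEq] at h1 h2
  rcases h1 with ⟨rfl, rfl⟩ | h1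
  · rcases h2 with ⟨rfl, _⟩ | h2
    · rfl
    · exact absurd h2 (Ts.inDeg_zero_not_mem hr.2)
  · rcases h2 with ⟨rfl, rfl⟩ | h2
    · exact absurd h1 (Ts.inDeg_zero_not_mem hr.2)
    · exact Ts.indeg_unique (hTs.2 c (Ts.arc_mem_snd h1)) h1 h2

/-- The tree `T` of the paper setup is acyclic. -/
lemma T_acyclic {Ns Ts N T : Digr V} {ρN ρT : V}
    (hsetup : PaperSetup Ns Ts N T ρN ρT) : T.Acyclic := by
  obtain ⟨_, _, hTs, _, _, hAtt⟩ := hsetup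
  exact attach_acyclic hAtt hTs.1.1.1

/-- In a canonical tree extension, leaves of `N` are leaves of `Γ`. -/
lemma nleaf_gleaf {N Γ : Digr V} (hΓ : Canonical N Γ) {ℓ : V}
    (h : ℓ ∈ N.leaves) : ℓ ∈ Γ.leaves := by
  obtain ⟨hext, hWC⟩ := hΓ
  have hℓΓ : ℓ ∈ Γ.verts := hext.2.1 ▸ h.1
  refine ⟨hℓΓ, ?_⟩
  by_contra hout
  obtain ⟨c, hc⟩ := Γ.outDeg_ne_zero_arc hout
  have hWc := hWC ℓ hℓΓ
  have hcU : Γ.Reach ℓ c := Relation.ReflTransGen.single hc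
  have hconn := hWc ℓ Relation.ReflTransGen.refl c hcU
  rcases hconn.cases_head with heq | ⟨z, hz, _⟩
  · exact Γ.arc_ne hc heq
  · obtain ⟨_, hzU, harc⟩ := hz
    rcases harc with harc | harc
    · exact N.outDeg_zero_not_mem h.2 harc
    · exact hext.1.1.1 ℓ (Relation.TransGen.trans_right hzU (hext.2.2 _ harc))

end Digr

namespace Digr

variable {V : Type} [DecidableEq V]

lemma leaf_in_FB {T : Digr V} {S : Set (V × V)} {a : V × V} {ℓ : V}
    (ha : a ∈ S) (hr : T.Reach a.2 ℓ) : ∃ e ∈ ForestBelow T S, e.2 = ℓ := by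
  rcases hr.cases_tail with heq | ⟨m, ham, hmℓ⟩
  · exact ⟨a, Or.inl ha, heq.symm⟩
  · exact ⟨(m, ℓ), Or.inr ⟨hmℓ, a, ha, ham⟩, rfl⟩

/-- Main forward lemma: for `a ∈ S`, the image arc `ψ a` lies in `GW` of one of the
children, and every `T`-leaf below `a.2` is `N`-reachable from its head. -/
lemma main_fwd {Ns Ts N T Γ : Digr V} {ρN ρT : V}
    (hsetup : PaperSetup Ns Ts N T ρN ρT) (hΓ : Canonical N Γ)
    {v q1 q2 : V} (hq1 : (v, q1) ∈ Γ.arcs)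
    (hchall : ∀ c, (v, c) ∈ Γ.arcs → c = q1 ∨ c = q2)
    {S : Set (V × V)} {ψ : V × V → Option (V × V)}
    (hsig : IsSig N T (HW N Γ v) S ψ)
    {φ : V × V → List V} (hφ : IsSPE N T (ForestBelow T S) φ)
    (hfirst : ∀ a ∈ S, firstArc (φ a) = ψ a)
    {a : V × V} (ha : a ∈ S) :
    ∃ c, (v, c) ∈ Γ.arcs ∧ (c = q1 ∨ c = q2) ∧ ∃ u w,
      ψ a = some (u, w) ∧ (u, w) ∈ GW N Γ c ∧
      ∀ ℓ, ℓ ∈ T.leaves → T.Reach a.2 ℓ → N.Reach w ℓ := by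
  obtain ⟨hBsub, hTop, hFL, hψval, hψnone⟩ := hsig
  obtain ⟨b, hbHW, hψa⟩ := hψval a ha
  obtain ⟨u, w⟩ := b
  obtain ⟨hbN, hbRv, hbSv⟩ := hbHW
  obtain ⟨c, hvc, hcw⟩ := Relation.TransGen.head'_iff.mp hbSv
  have hcq : c = q1 ∨ c = q2 := hchall c hvc
  have haF : a ∈ ForestBelow T S := Or.inl ha
  obtain ⟨t, hl⟩ := firstArc_inv (by rw [hfirst a ha, hψa] : firstArc (φ a) = some (u, w))
  have hstep : ∀ x y : V, (x, y) ∈ N.arcs → N.Reach w x → N.Reach w y :=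
    fun x y hxy hwx => hwx.tail hxy
  have hseed : ∀ z, (φ a).getLast? = some z → N.Reach w z := by
    have hch : (u :: w :: t).Chain' N.Adj := by
      have := (hφ.path _ haF).1.2.2.2; rwa [hl] at this
    intro z hz
    rw [hl] at hz
    exact (chain_prop2 N _ hstep hch Relation.ReflTransGen.refl).2 z hz
  have hmid : ∀ m x : V, T.Reach a.2 m → (m, x) ∈ T.arcs →
      (m, x) ∈ ForestBelow T S := fun m x hm hmx => Or.inr ⟨hmx, a, ha, hm⟩
  refine ⟨c, hvc, hcq, u, w, hψa, ⟨hbN, Relation.TransGen.tail' hbRv hvc, hcw⟩, ?_⟩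
  intro ℓ hℓT hℓr
  rcases hℓr.cases_tail with heq | ⟨m, ham, hmℓ⟩
  · have h4 := hφ.spe4 a.1 a.2 (by simpa using haF) (heq ▸ hℓT)
    have := hseed a.2 (by simpa using h4)
    exact heq ▸ this
  · have hmF : (m, ℓ) ∈ ForestBelow T S := hmid m ℓ ham hmℓ
    have h4 := hφ.spe4 m ℓ hmF hℓT
    exact (spe_chain hφ _ hstep haF hseed hmid m ham ℓ hmF).2 ℓ h4

end Digr

namespace Digr

variable {V : Type} [DecidableEq V]

set_option maxHeartbeats 1000000 in
/-- Forward direction, one side. -/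
lemma fwd_side {Ns Ts N T Γ : Digr V} {ρN ρT : V}
    (hsetup : PaperSetup Ns Ts N T ρN ρT) (hΓ : Canonical N Γ)
    {v q q' : V} (hq : (v, q) ∈ Γ.arcs) (hq' : (v, q') ∈ Γ.arcs)
    (hchall : ∀ c, (v, c) ∈ Γ.arcs → c = q ∨ c = q')
    {S : Set (V × V)} {ψ : V × V → Option (V × V)}
    (hsig : IsSig N T (HW N Γ v) S ψ)
    {φ : V × V → List V} (hφ : IsSPE N T (ForestBelow T S) φ)
    (hfirst : ∀ a ∈ S, firstArc (φ a) = ψ a) :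
    ValidSig N T (GW N Γ q)
      {a | a ∈ S ∧ {ℓ | ℓ ∈ T.leaves ∧ T.Reach a.2 ℓ} ⊆
        {ℓ | ℓ ∈ Γ.leaves ∧ Γ.Reach q ℓ}}
      (restrictPsi ψ {a | a ∈ S ∧ {ℓ | ℓ ∈ T.leaves ∧ T.Reach a.2 ℓ} ⊆
        {ℓ | ℓ ∈ Γ.leaves ∧ Γ.Reach q ℓ}}) := by
  set Sq : Set (V × V) := {a | a ∈ S ∧ {ℓ | ℓ ∈ T.leaves ∧ T.Reach a.2 ℓ} ⊆
    {ℓ | ℓ ∈ Γ.leaves ∧ Γ.Reach q ℓ}} with hSq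
  have hOT : Γ.IsOutTree := hΓ.1.1
  have hext : IsTreeExt N Γ := hΓ.1
  have hSarcs : S ⊆ ↑T.arcs := hsig.2.1.1
  have hFL := hsig.2.2.1
  have hTacyc := T_acyclic hsetup
  -- `T`-leaves below a top arc are `N`-leaves
  have hNleaf : ∀ a ∈ S, ∀ ℓ, ℓ ∈ T.leaves → T.Reach a.2 ℓ → ℓ ∈ N.leaves := by
    intro a ha ℓ hℓT hr
    obtain ⟨e, he, he2⟩ := leaf_in_FB ha hr
    have : ℓ ∈ forestLeaves T S := ⟨hℓT, e, he, he2⟩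
    rw [hFL] at this
    exact this.1
  -- membership in the side set
  have hmemSide : ∀ a ∈ S, ∀ c, (v, c) ∈ Γ.arcs → ∀ u w,
      (u, w) ∈ GW N Γ c → (∀ ℓ, ℓ ∈ T.leaves → T.Reach a.2 ℓ → N.Reach w ℓ) →
      {ℓ | ℓ ∈ T.leaves ∧ T.Reach a.2 ℓ} ⊆ {ℓ | ℓ ∈ Γ.leaves ∧ Γ.Reach c ℓ} := by
    rintro a ha c hvc u w hGW hreach ℓ ⟨hℓT, hℓr⟩
    refine ⟨nleaf_gleaf hΓ (hNleaf a ha ℓ hℓT hℓr), ?_⟩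
    exact hGW.2.2.trans (nreach_greach hext (hreach ℓ hℓT hℓr))
  -- the child of the main lemma is forced to `q` once a leaf below lies under `q`
  have hforce : ∀ (c : V), (v, c) ∈ Γ.arcs → ∀ ℓ, Γ.Reach c ℓ → Γ.Reach q ℓ →
      c = q := by
    intro c hvc ℓ h1 h2
    by_contra hne
    exact child_disj hOT hvc hq hne h1 h2
  have haT2 : ∀ a ∈ S, a.2 ∈ T.verts := by
    intro a ha
    exact T.arc_mem_snd (a := a.1) (b := a.2) (by simpa using hSarcs ha)
  -- reach from a.2 in T, given FB data
  have hreachFB : ∀ (a e : V × V), e = a ∨ (e ∈ T.arcs ∧ T.Reach a.2 e.1) →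
      T.Reach a.2 e.2 := by
    rintro a e (rfl | ⟨he1, hr⟩)
    · exact Relation.ReflTransGen.refl
    · exact hr.tail (show T.Adj e.1 e.2 from by simpa [Digr.Adj] using he1)
  -- for each a ∈ Sq, ψ a lands in GW q
  have hψGW : ∀ a ∈ Sq, ∃ u w, ψ a = some (u, w) ∧ (u, w) ∈ GW N Γ q ∧
      ∀ ℓ, ℓ ∈ T.leaves → T.Reach a.2 ℓ → N.Reach w ℓ := by
    rintro a ⟨haS, hside⟩
    obtain ⟨c, hvc, _, u, w, hψa, hGWc, hreach⟩ :=
      main_fwd hsetup hΓ hq hchall hsig hφ hfirst haS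
    obtain ⟨ℓ0, hℓ0, hrℓ0⟩ := reach_leaf T hTacyc a.2 (haT2 a haS)
    have hcℓ0 : Γ.Reach c ℓ0 :=
      hGWc.2.2.trans (nreach_greach hext (hreach ℓ0 hℓ0 hrℓ0))
    have hqℓ0 : Γ.Reach q ℓ0 := (hside ⟨hℓ0, hrℓ0⟩).2
    have hcq : c = q := hforce c hvc ℓ0 hcℓ0 hqℓ0
    subst hcq
    exact ⟨u, w, hψa, hGWc, hreach⟩
  refine ⟨⟨fun e he => he.1, ⟨fun a ha => hSarcs ha.1,
      fun a ha b hb => hsig.2.1.2 a ha.1 b (FB_mono T (fun x hx => hx.1) hb)⟩,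
      ?_, ?_, ?_⟩, φ, spe_mono hφ (FB_mono T (fun x hx => hx.1)), ?_⟩
  · -- forestLeaves equality
    ext ℓ
    constructor
    · rintro ⟨hℓT, e, heFB, he2⟩
      obtain ⟨a, haSq, hcase⟩ := FB_elim heFB
      have hr : T.Reach a.2 ℓ := he2 ▸ hreachFB a e hcase
      obtain ⟨u, w, hψa, hGW, hreach⟩ := hψGW a haSq
      exact ⟨hNleaf a haSq.1 ℓ hℓT hr, (u, w), hGW, hreach ℓ hℓT hr⟩
    · rintro ⟨hNl, b, hbGW, hbr⟩
      have hbHW : b ∈ HW N Γ v :=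
        ⟨hbGW.1, above_child hOT hq hbGW.2.1,
          Relation.TransGen.head' (show Γ.Adj v q from hq) hbGW.2.2⟩
      have hfl : ℓ ∈ forestLeaves T S := by
        rw [hFL]
        exact ⟨hNl, b, hbHW, hbr⟩
      obtain ⟨hℓT, e, heFB, he2⟩ := hfl
      obtain ⟨a, haS, hcase⟩ := FB_elim heFB
      have hr : T.Reach a.2 ℓ := he2 ▸ hreachFB a e hcase
      obtain ⟨c, hvc, _, u, w, hψa, hGWc, hreach⟩ :=
        main_fwd hsetup hΓ hq hchall hsig hφ hfirst haS
      have hcℓ : Γ.Reach c ℓ :=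
        hGWc.2.2.trans (nreach_greach hext (hreach ℓ hℓT hr))
      have hqℓ : Γ.Reach q ℓ := hbGW.2.2.trans (nreach_greach hext hbr)
      have hcq : c = q := hforce c hvc ℓ hcℓ hqℓ
      subst hcq
      have haSq : a ∈ Sq := ⟨haS, hmemSide a haS c hvc u w hGWc hreach⟩
      refine ⟨hℓT, e, ?_, he2⟩
      rcases hcase with rfl | ⟨he1, hre⟩
      · exact Or.inl haSq
      · exact Or.inr ⟨he1, a, haSq, hre⟩
  · -- ψ values in GW q
    intro a ha
    obtain ⟨u, w, hψa, hGW, _⟩ := hψGW a ha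
    refine ⟨(u, w), hGW, ?_⟩
    rw [restrictPsi, if_pos ha, hψa]
  · -- support
    intro a ha
    rw [restrictPsi, if_neg ha]
  · -- first arcs
    intro a ha
    rw [restrictPsi, if_pos ha]
    exact hfirst a ha.1

end Digr

namespace Digr

variable {V : Type} [DecidableEq V]

/-- Region lemma: all arcs on the images of a valid SPE for `GW_q` have heads
below `q` in `Γ`. -/
lemma region {N T Γ : Digr V} (hext : IsTreeExt N Γ) {q : V}
    {S' : Set (V × V)} {φ' : V × V → List V}
    (hφ' : IsSPE N T (ForestBelow T S') φ')
    (hval : ∀ a ∈ S', ∃ u w, firstArc (φ' a) = some (u, w) ∧ Γ.Reach q w) :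
    ∀ e ∈ ForestBelow T S', ∀ p ∈ arcsOfList (φ' e), Γ.Reach q p.2 := by
  have hstep : ∀ a b : V, (a, b) ∈ N.arcs → Γ.Reach q a → Γ.Reach q b :=
    fun a b hab hqa => hqa.trans (hext.2.2 _ hab).to_reflTransGen
  have htop : ∀ a ∈ S', (∀ p ∈ arcsOfList (φ' a), Γ.Reach q p.2) ∧
      (∀ z, (φ' a).getLast? = some z → Γ.Reach q z) := by
    intro a ha
    obtain ⟨u, w, hfa, hqw⟩ := hval a ha
    obtain ⟨t, hl⟩ := firstArc_inv hfa
    have hch : (u :: w :: t).Chain' N.Adj := by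
      have := (hφ'.path _ (Or.inl ha)).1.2.2.2; rwa [hl] at this
    have := chain_prop2 N _ hstep hch hqw
    rw [hl]
    exact this
  intro e he
  obtain ⟨a, ha, hcase⟩ := FB_elim he
  rcases hcase with rfl | ⟨he1, hre⟩
  · exact (htop e ha).1
  · have hmid : ∀ m x : V, T.Reach a.2 m → (m, x) ∈ T.arcs →
        (m, x) ∈ ForestBelow T S' := fun m x hm hmx => Or.inr ⟨hmx, a, ha, hm⟩
    have := (spe_chain hφ' _ hstep (Or.inl ha) (htop a ha).2 hmid e.1 hre e.2
      (show (e.1, e.2) ∈ ForestBelow T S' from he)).1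
    exact this

end Digr

/-- `[HW_v(Γ), S, ψ]` is valid iff `S = S₁ ∪ S₂` and the
restrictions to the children `q₁, q₂` are valid. -/
theorem stmt5 {V : Type} [DecidableEq V] (Ns Ts N T Γ : Digr V) (ρN ρT : V)
    (hsetup : PaperSetup Ns Ts N T ρN ρT) (hΓ : Canonical N Γ)
    (v q1 q2 : V) (hv : v ∈ Γ.verts) (hnr : ¬ Γ.IsRoot v) (hnl : v ∉ Γ.leaves)
    (hch : {x | (v, x) ∈ Γ.arcs} = ({q1, q2} : Set V))
    (S : Set (V × V)) (ψ : V × V → Option (V × V))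
    (hsig : IsSig N T (HW N Γ v) S ψ)
    (S1 S2 : Set (V × V))
    (hS1 : S1 = {a | a ∈ S ∧
      {ℓ | ℓ ∈ T.leaves ∧ T.Reach a.2 ℓ} ⊆ {ℓ | ℓ ∈ Γ.leaves ∧ Γ.Reach q1 ℓ}})
    (hS2 : S2 = {a | a ∈ S ∧
      {ℓ | ℓ ∈ T.leaves ∧ T.Reach a.2 ℓ} ⊆ {ℓ | ℓ ∈ Γ.leaves ∧ Γ.Reach q2 ℓ}}) :
    ValidSig N T (HW N Γ v) S ψ ↔
      (S = S1 ∪ S2 ∧ ValidSig N T (GW N Γ q1) S1 (restrictPsi ψ S1) ∧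
        ValidSig N T (GW N Γ q2) S2 (restrictPsi ψ S2)) := by
  classical
  have hq1 : (v, q1) ∈ Γ.arcs := by
    have : q1 ∈ {x | (v, x) ∈ Γ.arcs} := by rw [hch]; exact Set.mem_insert _ _
    exact this
  have hq2 : (v, q2) ∈ Γ.arcs := by
    have : q2 ∈ {x | (v, x) ∈ Γ.arcs} := by rw [hch]; right; rfl
    exact this
  have hchall : ∀ c, (v, c) ∈ Γ.arcs → c = q1 ∨ c = q2 := by
    intro c h
    have : c ∈ ({q1, q2} : Set V) := hch ▸ h
    simpa using this
  have hext : IsTreeExt N Γ := hΓ.1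
  have hOT : Γ.IsOutTree := hΓ.1.1
  have hS1S : S1 ⊆ S := by rw [hS1]; exact fun a ha => ha.1
  have hS2S : S2 ⊆ S := by rw [hS2]; exact fun a ha => ha.1
  have harcF : ∀ e ∈ ForestBelow T S, e ∈ T.arcs :=
    fun e he => FB_sub_arcs T hsig.2.1.1 he
  constructor
  · -- forward direction
    rintro ⟨hsig', φ, hφ, hfirst⟩
    refine ⟨?_, ?_, ?_⟩
    · -- S = S1 ∪ S2
      ext a
      constructor
      · intro ha
        obtain ⟨c, hvc, hcq, u, w, hψa, hGW, hreach⟩ :=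
          main_fwd hsetup hΓ hq1 hchall hsig hφ hfirst ha
        have hNleaf : ∀ ℓ, ℓ ∈ T.leaves → T.Reach a.2 ℓ → ℓ ∈ N.leaves := by
          intro ℓ hT hr
          obtain ⟨e, he, he2⟩ := leaf_in_FB ha hr
          have hm : ℓ ∈ forestLeaves T S := ⟨hT, e, he, he2⟩
          rw [hsig.2.2.1] at hm
          exact hm.1
        have hside : {ℓ | ℓ ∈ T.leaves ∧ T.Reach a.2 ℓ} ⊆
            {ℓ | ℓ ∈ Γ.leaves ∧ Γ.Reach c ℓ} := by
          rintro ℓ ⟨hℓT, hℓr⟩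
          exact ⟨nleaf_gleaf hΓ (hNleaf ℓ hℓT hℓr),
            hGW.2.2.trans (nreach_greach hext (hreach ℓ hℓT hℓr))⟩
        rcases hcq with rfl | rfl
        · exact Or.inl (by rw [hS1]; exact ⟨ha, hside⟩)
        · exact Or.inr (by rw [hS2]; exact ⟨ha, hside⟩)
      · rintro (ha | ha)
        exacts [hS1S ha, hS2S ha]
    · rw [hS1]
      exact fwd_side hsetup hΓ hq1 hq2 hchall hsig hφ hfirst
    · rw [hS2]
      exact fwd_side hsetup hΓ hq2 hq1 (fun c h => (hchall c h).symm) hsig hφ hfirst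
  · -- backward direction
    rintro ⟨hSU, ⟨hsig1, φ1, hφ1, hfirst1⟩, ⟨hsig2, φ2, hφ2, hfirst2⟩⟩
    refine ⟨hsig, ?_⟩
    by_cases hqq : q1 = q2
    · -- degenerate case: one child
      have hSS : S1 = S2 := by rw [hS1, hS2, hqq]
      have hSeq : S = S1 := by rw [hSU, hSS, Set.union_self]
      have hFeq : ForestBelow T S = ForestBelow T S1 := by rw [hSeq]
      refine ⟨φ1, by rw [hFeq]; exact hφ1, ?_⟩
      intro a ha
      have ha1 : a ∈ S1 := hSeq ▸ ha
      rw [hfirst1 a ha1]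
      simp only [restrictPsi]
      rw [if_pos ha1]
    · -- main case: two distinct children
      have hFsub : ForestBelow T S = ForestBelow T S1 ∪ ForestBelow T S2 := by
        rw [hSU, FB_union]
      have hval1 : ∀ a ∈ S1, ∃ u w, firstArc (φ1 a) = some (u, w) ∧
          Γ.Reach q1 w := by
        intro a ha
        obtain ⟨b, hbGW, hres⟩ := hsig1.2.2.2.1 a ha
        obtain ⟨u, w⟩ := b
        exact ⟨u, w, by rw [hfirst1 a ha, hres], hbGW.2.2⟩
      have hval2 : ∀ a ∈ S2, ∃ u w, firstArc (φ2 a) = some (u, w) ∧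
          Γ.Reach q2 w := by
        intro a ha
        obtain ⟨b, hbGW, hres⟩ := hsig2.2.2.2.1 a ha
        obtain ⟨u, w⟩ := b
        exact ⟨u, w, by rw [hfirst2 a ha, hres], hbGW.2.2⟩
      have hreg1 := region hext hφ1 hval1
      have hreg2 := region hext hφ2 hval2
      have hdisj : ∀ e ∈ ForestBelow T S1, ∀ e' ∈ ForestBelow T S2,
          List.Disjoint (arcsOfList (φ1 e)) (arcsOfList (φ2 e')) := by
        intro e he e' he' p hp hp'
        exact child_disj hOT hq1 hq2 hqq (hreg1 e he p hp) (hreg2 e' he' p hp')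
      have hmem2 : ∀ e ∈ ForestBelow T S, e ∉ ForestBelow T S1 →
          e ∈ ForestBelow T S2 := by
        intro e he hn
        have h' : e ∈ ForestBelow T S1 ∪ ForestBelow T S2 := hFsub ▸ he
        rcases h' with h | h
        · exact absurd h hn
        · exact h
      have hcl1 : ∀ x y z : V, (x, y) ∈ ForestBelow T S1 → (y, z) ∈ T.arcs →
          (y, z) ∈ ForestBelow T S1 := by
        rintro x y z (h | ⟨ha1, a, ha, hr⟩) hyz
        · exact Or.inr ⟨hyz, (x, y), h, Relation.ReflTransGen.refl⟩
        · exact Or.inr ⟨hyz, a, ha,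
            hr.tail (show T.Adj x y from by simpa [Digr.Adj] using ha1)⟩
      have hncl : ∀ x y z : V, (x, y) ∈ ForestBelow T S →
          (x, y) ∉ ForestBelow T S1 → (y, z) ∈ ForestBelow T S1 → False := by
        rintro x y z hxyF hxy1 (h | ⟨hb1, a, ha, hr⟩)
        · exact hsig.2.1.2 (y, z) (hS1S h) (x, y) hxyF rfl
        · have hxyT : (x, y) ∈ T.arcs := harcF (x, y) hxyF
          rcases hr.cases_tail with heq | ⟨m, ham, hmy⟩
          · have heq' : y = a.2 := heq
            subst heq'
            have haT : (a.1, a.2) ∈ T.arcs := by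
              simpa using hsig.2.1.1 (hS1S ha)
            have hax : a.1 = x := T_in_unique hsetup haT hxyT
            apply hxy1
            have ha' : a = (x, a.2) := by
              rw [Prod.ext_iff]
              exact ⟨hax, rfl⟩
            exact Or.inl (ha' ▸ ha)
          · have hmx : m = x := T_in_unique hsetup hmy hxyT
            exact hxy1 (Or.inr ⟨hxyT, a, ha, hmx ▸ ham⟩)
      have hS2F1 : ∀ a ∈ S2, a ∈ ForestBelow T S1 → a ∈ S1 := by
        rintro a ha (h | ⟨ha1, a', ha', hr⟩)
        · exact h
        · exfalso
          rcases hr.cases_tail with heq | ⟨m, ham, hmy⟩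
          · exact hsig.2.1.2 a (hS2S ha) a' (Or.inl (hS1S ha')) heq.symm
          · exact hsig.2.1.2 a (hS2S ha) (m, a.1)
              (Or.inr ⟨hmy, a', hS1S ha', ham⟩) rfl
      refine ⟨fun e => if e ∈ ForestBelow T S1 then φ1 e else φ2 e,
        ⟨?_, ?_, ?_, ?_, ?_⟩, ?_⟩
      · -- paths
        intro a ha
        by_cases h1 : a ∈ ForestBelow T S1
        · rw [if_pos h1]; exact hφ1.path a h1
        · rw [if_neg h1]; exact hφ2.path a (hmem2 a ha h1)
      · -- spe1
        intro x y z h1 h2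
        by_cases hxy : (x, y) ∈ ForestBelow T S1
        · have hyz : (y, z) ∈ ForestBelow T S1 := hcl1 x y z hxy (harcF _ h2)
          rw [if_pos hxy, if_pos hyz]
          exact hφ1.spe1 x y z hxy hyz
        · have hyz : (y, z) ∉ ForestBelow T S1 := fun hc => hncl x y z h1 hxy hc
          rw [if_neg hxy, if_neg hyz]
          exact hφ2.spe1 x y z (hmem2 _ h1 hxy) (hmem2 _ h2 hyz)
      · -- spe2
        intro x y x' y' h1 h2 hne
        by_cases ha : (x, y) ∈ ForestBelow T S1 <;>
          by_cases hb : (x', y') ∈ ForestBelow T S1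
        · rw [if_pos ha, if_pos hb]; exact hφ1.spe2 x y x' y' ha hb hne
        · rw [if_pos ha, if_neg hb]; exact hdisj _ ha _ (hmem2 _ h2 hb)
        · rw [if_neg ha, if_pos hb]; exact (hdisj _ hb _ (hmem2 _ h1 ha)).symm
        · rw [if_neg ha, if_neg hb]
          exact hφ2.spe2 x y x' y' (hmem2 _ h1 ha) (hmem2 _ h2 hb) hne
      · -- spe3
        intro x y y' h1 h2 hne
        by_cases ha : (x, y) ∈ ForestBelow T S1 <;>
          by_cases hb : (x, y') ∈ ForestBelow T S1
        · rw [if_pos ha, if_pos hb]; exact hφ1.spe3 x y y' ha hb hne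
        · rw [if_pos ha, if_neg hb]
          obtain ⟨u, w, t, hl⟩ : ∃ u w t, φ1 (x, y) = u :: w :: t := by
            obtain ⟨hp, hlen⟩ := hφ1.path _ ha
            match hll : φ1 (x, y), hlen with
            | u :: w :: t, _ => exact ⟨u, w, t, rfl⟩
          rw [hl]
          refine ⟨(hφ2.path _ (hmem2 _ h2 hb)).2, Or.inl ?_⟩
          rw [← hl]
          exact hdisj _ ha _ (hmem2 _ h2 hb)
        · rw [if_neg ha, if_pos hb]
          obtain ⟨u, w, t, hl⟩ : ∃ u w t, φ2 (x, y) = u :: w :: t := by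
            obtain ⟨hp, hlen⟩ := hφ2.path _ (hmem2 _ h1 ha)
            match hll : φ2 (x, y), hlen with
            | u :: w :: t, _ => exact ⟨u, w, t, rfl⟩
          rw [hl]
          refine ⟨(hφ1.path _ hb).2, Or.inl ?_⟩
          rw [← hl]
          exact (hdisj _ hb _ (hmem2 _ h1 ha)).symm
        · rw [if_neg ha, if_neg hb]
          exact hφ2.spe3 x y y' (hmem2 _ h1 ha) (hmem2 _ h2 hb) hne
      · -- spe4
        intro x ℓ h1 h2
        by_cases ha : (x, ℓ) ∈ ForestBelow T S1
        · rw [if_pos ha]; exact hφ1.spe4 x ℓ ha h2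
        · rw [if_neg ha]; exact hφ2.spe4 x ℓ (hmem2 _ h1 ha) h2
      · -- first arcs
        intro a ha
        by_cases h1 : a ∈ ForestBelow T S1
        · have ha1 : a ∈ S1 := by
            rcases (hSU ▸ ha : a ∈ S1 ∪ S2) with h | h
            · exact h
            · exact hS2F1 a h h1
          show firstArc (if a ∈ ForestBelow T S1 then φ1 a else φ2 a) = ψ a
          rw [if_pos h1, hfirst1 a ha1]
          simp only [restrictPsi]
          rw [if_pos ha1]
        · have ha2 : a ∈ S2 := by
            rcases (hSU ▸ ha : a ∈ S1 ∪ S2) with h | h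
            · exact absurd (Or.inl h) h1
            · exact h
          show firstArc (if a ∈ ForestBelow T S1 then φ1 a else φ2 a) = ψ a
          rw [if_neg h1, hfirst2 a ha2]
          simp only [restrictPsi]
          rw [if_pos ha2]
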